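/- For S ≥ 0 and arbitrary integer M, the sum Σ_{k ∈ ℤ} q^{k² + a·k} [M, a+k]⁺_q [S, k]⁺_q equals the extended q-binomial coefficient [M+S, S+a]⁺_q. -/

import Mathlib

noncomputable section
open LaurentPolynomial

def gaussRec (v : LaurentPolynomial ℤ) : ℕ → ℕ → LaurentPolynomial ℤ
  | 0, 0 => 1
  | 0, _ + 1 => 0
  | _ + 1, 0 => 1
  | n + 1, m + 1 => gaussRec v n (m + 1) * v ^ (m + 1) + gaussRec v n m

/-- `[n m]_v` for integer indices: the Gaussian binomial in the variable `v`,
zero unless `0 ≤ m ≤ n`. -/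
def gaussZ (v : LaurentPolynomial ℤ) (n m : ℤ) : LaurentPolynomial ℤ :=
  if 0 ≤ m ∧ m ≤ n then gaussRec v n.toNat m.toNat else 0

/-- The Gaussian binomial coefficient `[n m]_q` as a Laurent polynomial in `q = T 1`. -/
def qbin (n m : ℤ) : LaurentPolynomial ℤ := gaussZ (T 1) n m

/-- The extended q-binomial coefficient `[n m]⁺_q ∈ ℤ[q,q⁻¹]`. -/
def qbinPlus (n m : ℤ) : LaurentPolynomial ℤ :=
  if 0 ≤ n then qbin n m
  else (-1) ^ (n - m).natAbs * T (-(((n - m) ^ 2 + (n - m)) / 2)) *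
    gaussZ (T (-1)) (-m - 1) (-n - 1)


variable (v : LaurentPolynomial ℤ)

lemma gaussRec_zero_right : ∀ n, gaussRec v n 0 = 1
  | 0 => rfl
  | _ + 1 => rfl

lemma gaussRec_pascal (n m : ℕ) :
    gaussRec v (n + 1) (m + 1) = gaussRec v n (m + 1) * v ^ (m + 1) + gaussRec v n m := rfl

lemma gaussRec_eq_zero : ∀ n m, n < m → gaussRec v n m = 0
  | 0, _ + 1, _ => rfl
  | n + 1, m + 1, h => by
    rw [gaussRec_pascal, gaussRec_eq_zero n (m+1) (by omega),
      gaussRec_eq_zero n m (by omega)]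
    ring

lemma gaussRec_self : ∀ n, gaussRec v n n = 1
  | 0 => rfl
  | n + 1 => by
    rw [gaussRec_pascal, gaussRec_eq_zero v n (n+1) (by omega), gaussRec_self n]
    ring

lemma gaussRec_one_mul : ∀ n, gaussRec v n 1 * (v - 1) = v ^ n - 1
  | 0 => by rw [gaussRec_eq_zero v 0 1 (by omega)]; ring
  | n + 1 => by
    have h := gaussRec_one_mul n
    rw [gaussRec_pascal, gaussRec_zero_right]
    linear_combination v * h

lemma gaussRec_pascal2 : ∀ n, ∀ m, m ≤ n →
    gaussRec v (n + 1) (m + 1) = gaussRec v n (m + 1) + v ^ (n - m) * gaussRec v n m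
  | 0, 0, _ => by
    rw [gaussRec_pascal, gaussRec_eq_zero v 0 1 (by omega)]
    norm_num
  | n + 1, m, hm => by
    rcases Nat.lt_or_ge m (n + 1) with hlt | hge
    · rcases Nat.eq_zero_or_pos m with rfl | hpos
      · -- m = 0
        have h := gaussRec_one_mul v (n + 1)
        rw [gaussRec_pascal, gaussRec_zero_right]
        norm_num
        linear_combination h
      · obtain ⟨m', rfl⟩ : ∃ m', m = m' + 1 := ⟨m - 1, by omega⟩
        obtain ⟨t, rfl⟩ : ∃ t, n = m' + 1 + t := ⟨n - (m' + 1), by omega⟩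
        have h1 := gaussRec_pascal2 (m' + 1 + t) (m' + 1) (by omega)
        have h2 := gaussRec_pascal2 (m' + 1 + t) m' (by omega)
        have e1 : m' + 1 + t - (m' + 1) = t := by omega
        have e2 : m' + 1 + t - m' = t + 1 := by omega
        have e3 : m' + 1 + t + 1 - (m' + 1) = t + 1 := by omega
        rw [e1] at h1
        rw [e2] at h2
        rw [e3]
        have p0 := gaussRec_pascal v (m' + 1 + t + 1) (m' + 1)
        have q1 := gaussRec_pascal v (m' + 1 + t) (m' + 1)
        have q2 := gaussRec_pascal v (m' + 1 + t) m'
        linear_combination p0 + v ^ (m' + 1 + 1) * h1 + h2 - q1 - v ^ (t + 1) * q2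
    · obtain rfl : m = n + 1 := by omega
      rw [gaussRec_pascal, gaussRec_eq_zero v (n+1) (n+1+1) (by omega), gaussRec_self,
        Nat.sub_self]
      ring


variable (v : LaurentPolynomial ℤ)

lemma gaussZ_of_le (n m : ℤ) (hm : 0 ≤ m) (hmn : m ≤ n) :
    gaussZ v n m = gaussRec v n.toNat m.toNat := if_pos ⟨hm, hmn⟩

lemma gaussZ_eq_zero (n m : ℤ) (h : ¬ (0 ≤ m ∧ m ≤ n)) : gaussZ v n m = 0 := if_neg h

/-- Pascal I for `gaussZ`, in subtraction form. -/
lemma gaussZ_pascal' (n m : ℤ) (hn : 1 ≤ n) (hm : 1 ≤ m) :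
    gaussZ v n m = gaussZ v (n - 1) m * v ^ m.toNat + gaussZ v (n - 1) (m - 1) := by
  by_cases h : m ≤ n
  · have e1 : n.toNat = (n - 1).toNat + 1 := by omega
    have e2 : m.toNat = (m - 1).toNat + 1 := by omega
    rw [gaussZ_of_le v n m (by omega) h, gaussZ_of_le v (n-1) (m-1) (by omega) (by omega),
      e1, e2, gaussRec_pascal]
    by_cases h2 : m ≤ n - 1
    · rw [gaussZ_of_le v (n-1) m (by omega) h2, e2]
    · rw [gaussZ_eq_zero v (n-1) m (by omega), gaussRec_eq_zero v _ _ (by omega)]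
  · rw [gaussZ_eq_zero v n m (by omega), gaussZ_eq_zero v (n-1) m (by omega),
      gaussZ_eq_zero v (n-1) (m-1) (by omega)]
    ring

/-- Pascal II for `gaussZ`. -/
lemma gaussZ_pascal2 (n m : ℤ) (hn : 0 ≤ n) :
    gaussZ v (n + 1) m = gaussZ v n m + v ^ (n + 1 - m).toNat * gaussZ v n (m - 1) := by
  rcases lt_or_ge m 0 with h | h
  · rw [gaussZ_eq_zero v (n+1) m (by omega), gaussZ_eq_zero v n m (by omega),
      gaussZ_eq_zero v n (m-1) (by omega)]
    ring
  rcases eq_or_lt_of_le h with rfl | hpos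
  · rw [gaussZ_of_le v (n+1) 0 le_rfl (by omega), gaussZ_of_le v n 0 le_rfl hn,
      gaussZ_eq_zero v n (0-1) (by omega)]
    simp [gaussRec_zero_right]
  rcases lt_or_ge n m with h2 | h2
  · by_cases h3 : m = n + 1
    · subst h3
      rw [gaussZ_of_le v (n+1) (n+1) (by omega) le_rfl,
        gaussZ_eq_zero v n (n+1) (by omega), gaussZ_of_le v n (n+1-1) (by omega) (by omega)]
      have e : (n + 1 - (n + 1)).toNat = 0 := by omega
      have e2 : (n + 1 - 1).toNat = n.toNat := by omega
      rw [e, e2, gaussRec_self, gaussRec_self]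
      ring
    · rw [gaussZ_eq_zero v (n+1) m (by omega), gaussZ_eq_zero v n m (by omega),
        gaussZ_eq_zero v n (m-1) (by omega)]
      ring
  · -- 1 ≤ m ≤ n
    have e1 : (n + 1).toNat = n.toNat + 1 := by omega
    have e2 : m.toNat = (m - 1).toNat + 1 := by omega
    have e3 : (n + 1 - m).toNat = n.toNat - (m - 1).toNat := by omega
    rw [gaussZ_of_le v (n+1) m h (by omega), gaussZ_of_le v n m h h2,
      gaussZ_of_le v n (m-1) (by omega) (by omega),
      e1, e2, e3, gaussRec_pascal2 v _ _ (by omega)]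


lemma T_one_pow (k : ℕ) : (T 1 : LaurentPolynomial ℤ) ^ k = T (k : ℤ) := by
  rw [T_pow, mul_one]

lemma T_neg_one_pow (k : ℕ) : (T (-1) : LaurentPolynomial ℤ) ^ k = T (-(k : ℤ)) := by
  rw [T_pow, mul_neg_one]

lemma qbin_pascal (n m : ℤ) (hn : 0 ≤ n) :
    qbin (n + 1) (m + 1) = T (m + 1) * qbin n (m + 1) + qbin n m := by
  unfold qbin
  rcases lt_trichotomy (m + 1) 0 with h | h | h
  · rw [gaussZ_eq_zero _ (n+1) (m+1) (by omega), gaussZ_eq_zero _ n (m+1) (by omega),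
      gaussZ_eq_zero _ n m (by omega)]
    ring
  · rw [h, gaussZ_eq_zero _ n m (by omega), gaussZ_of_le _ (n+1) 0 le_rfl (by omega),
      gaussZ_of_le _ n 0 le_rfl hn]
    norm_num [gaussRec_zero_right]
  · have h2 := gaussZ_pascal' (T 1) (n+1) (m+1) (by omega) (by omega)
    have e1 : n + 1 - 1 = n := by ring
    have e2 : m + 1 - 1 = m := by ring
    rw [e1, e2, T_one_pow] at h2
    have e3 : (((m+1).toNat : ℤ)) = m + 1 := by omega
    rw [e3] at h2
    rw [h2]; ring

lemma qbin_pascal2 (S k : ℤ) (hS : 0 ≤ S) :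
    qbin (S + 1) k = qbin S k + T (S + 1 - k) * qbin S (k - 1) := by
  unfold qbin
  rcases le_or_gt k (S + 1) with h | h
  · have h2 := gaussZ_pascal2 (T 1) S k hS
    rw [T_one_pow] at h2
    have e : (((S + 1 - k).toNat : ℤ)) = S + 1 - k := by omega
    rw [e] at h2
    rw [h2]
  · rw [gaussZ_eq_zero _ (S+1) k (by omega), gaussZ_eq_zero _ S k (by omega),
      gaussZ_eq_zero _ S (k-1) (by omega)]
    ring

lemma neg_one_pow_pred (d : ℤ) :
    ((-1 : LaurentPolynomial ℤ)) ^ (d - 1).natAbs = -(-1) ^ d.natAbs := by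
  have h : ((-1 : LaurentPolynomial ℤ)) ^ (d - 1).natAbs * (-1) ^ d.natAbs = -1 := by
    rw [← pow_add]
    exact Odd.neg_one_pow (Nat.odd_iff.mpr (by omega))
  have h2 : ((-1 : LaurentPolynomial ℤ)) ^ d.natAbs * (-1) ^ d.natAbs = 1 := by
    rw [← pow_add]
    exact Even.neg_one_pow (Nat.even_iff.mpr (by omega))
  linear_combination ((-1 : LaurentPolynomial ℤ)) ^ d.natAbs * h
    - ((-1 : LaurentPolynomial ℤ)) ^ (d - 1).natAbs * h2

lemma epred (d : ℤ) : -((((d - 1) ^ 2 + (d - 1)) / 2)) = -(((d ^ 2 + d) / 2)) + d := by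
  obtain ⟨c, hc⟩ := Int.even_mul_succ_self d
  have h2 : d ^ 2 + d = c + c := by linear_combination hc
  have h3 : (d - 1) ^ 2 + (d - 1) = (c - d) + (c - d) := by linear_combination hc
  rw [h2, h3]
  omega

lemma qbinPlus_of_nonneg (n m : ℤ) (h : 0 ≤ n) : qbinPlus n m = qbin n m := if_pos h

lemma qbinPlus_of_neg (n m : ℤ) (h : n < 0) :
    qbinPlus n m = (-1) ^ (n - m).natAbs * T (-(((n - m) ^ 2 + (n - m)) / 2)) *
      gaussZ (T (-1)) (-m - 1) (-n - 1) := if_neg (by omega)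

lemma qbinPlus_pascal (n m : ℤ) :
    qbinPlus (n + 1) (m + 1) = T (m + 1) * qbinPlus n (m + 1) + qbinPlus n m := by
  rcases le_or_gt 0 n with hn | hn
  · rw [qbinPlus_of_nonneg _ _ (by omega), qbinPlus_of_nonneg _ _ hn,
      qbinPlus_of_nonneg _ _ hn, qbin_pascal n m hn]
  rcases eq_or_lt_of_le (by omega : n ≤ -1) with rfl | hn2
  · -- n = -1
    rw [show (-1 : ℤ) + 1 = 0 by norm_num, qbinPlus_of_nonneg 0 (m+1) le_rfl, qbinPlus_of_neg (-1) (m+1) (by omega),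
      qbinPlus_of_neg (-1) m (by omega)]
    rcases lt_trichotomy m (-1) with h | rfl | h
    · -- m ≤ -2 : LHS = 0, the two RHS terms cancel
      rw [show qbin 0 (m+1) = 0 from gaussZ_eq_zero _ 0 (m+1) (by omega)]
      rw [gaussZ_of_le _ (-(m+1)-1) (-(-1)-1) (by omega) (by omega),
        gaussZ_of_le _ (-m-1) (-(-1)-1) (by omega) (by omega)]
      norm_num [gaussRec_zero_right]
      have e : -1 - (m + 1) = (-1 - m) - 1 := by ring
      rw [e, neg_one_pow_pred (-1 - m)]
      have he : -(((-1 - m - 1) ^ 2 + (-1 - m - 1)) / 2) + (m + 1)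
          = -(((-1 - m) ^ 2 + (-1 - m)) / 2) := by
        have := epred (-1 - m)
        omega
      rw [he]
      ring
    · -- m = -1
      norm_num [qbin, gaussZ, gaussRec]
    · -- m ≥ 0 : everything is 0
      rw [show qbin 0 (m+1) = 0 from gaussZ_eq_zero _ 0 (m+1) (by omega),
        gaussZ_eq_zero _ (-(m+1)-1) (-(-1)-1) (by omega),
        gaussZ_eq_zero _ (-m-1) (-(-1)-1) (by omega)]
      ring
  · -- n ≤ -2
    rw [qbinPlus_of_neg (n+1) (m+1) (by omega), qbinPlus_of_neg n (m+1) (by omega),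
      qbinPlus_of_neg n m (by omega)]
    have ed : n + 1 - (m + 1) = n - m := by ring
    rw [ed]
    rcases le_or_gt 0 (m+1) with hm | hm
    · rw [gaussZ_eq_zero _ (-(m+1)-1) (-(n+1)-1) (by omega),
        gaussZ_eq_zero _ (-(m+1)-1) (-n-1) (by omega),
        gaussZ_eq_zero _ (-m-1) (-n-1) (by omega)]
      ring
    · have hp := gaussZ_pascal' (T (-1)) (-m-1) (-n-1) (by omega) (by omega)
      rw [T_neg_one_pow] at hp
      have e4 : (-(((-n-1).toNat : ℤ))) = n + 1 := by omega
      rw [e4] at hp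
      have e5 : -m - 1 - 1 = -(m+1) - 1 := by ring
      have e6 : -n - 1 - 1 = -(n+1) - 1 := by ring
      rw [e5, e6] at hp
      have hs := neg_one_pow_pred (n - m)
      have e7 : n - (m+1) = (n - m) - 1 := by ring
      rw [e7, hs]
      have he : (T (m + 1) : LaurentPolynomial ℤ) * T (-(((n - m - 1) ^ 2 + (n - m - 1)) / 2))
          = T (-(((n - m) ^ 2 + (n - m)) / 2)) * T (n + 1) := by
        rw [← T_add, ← T_add]
        congr 1
        have := epred (n - m)
        omega
      linear_combination
        (-(((-1 : LaurentPolynomial ℤ)) ^ (n - m).natAbs *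
          T (-(((n - m) ^ 2 + (n - m)) / 2)))) * hp +
        (((-1 : LaurentPolynomial ℤ)) ^ (n - m).natAbs *
          gaussZ (T (-1)) (-(m+1)-1) (-n-1)) * he


lemma qbin_eq_zero (S k : ℤ) (h : ¬ (0 ≤ k ∧ k ≤ S)) : qbin S k = 0 :=
  gaussZ_eq_zero _ S k h

lemma qbin_zero_zero : qbin 0 0 = 1 := by
  rw [qbin, gaussZ_of_le _ 0 0 le_rfl le_rfl]
  norm_num [gaussRec]

lemma support_finite_between (lo hi : ℤ) (g : ℤ → LaurentPolynomial ℤ)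
    (h : ∀ k, k < lo ∨ hi < k → g k = 0) : (Function.support g).Finite := by
  apply Set.Finite.subset (Set.finite_Icc lo hi)
  intro k hk
  rw [Function.mem_support] at hk
  rw [Set.mem_Icc]
  by_contra hc
  exact hk (h k (by omega))

theorem qbinPlus_knuth_aux (M : ℤ) (S : ℤ) (hS : 0 ≤ S) : ∀ a : ℤ,
    (∑ᶠ k : ℤ, T (k ^ 2 + a * k) * qbinPlus M (a + k) * qbinPlus S k) =
      qbinPlus (M + S) (S + a) := by
  refine Int.le_induction (motive := fun S _ => ∀ a : ℤ,
    (∑ᶠ k : ℤ, T (k ^ 2 + a * k) * qbinPlus M (a + k) * qbinPlus S k) =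
      qbinPlus (M + S) (S + a)) ?_ ?_ S hS
  · intro a
    rw [finsum_eq_single _ 0 (by
      intro x hx
      rw [qbinPlus_of_nonneg 0 x le_rfl, qbin_eq_zero 0 x (by omega)]
      ring)]
    rw [qbinPlus_of_nonneg 0 0 le_rfl, qbin_zero_zero, add_zero, zero_add]
    norm_num
  · intro S hS IH a
    have h1 : (∑ᶠ k : ℤ, T (k ^ 2 + a * k) * qbinPlus M (a + k) * qbinPlus (S + 1) k)
        = (∑ᶠ k : ℤ, (T (k ^ 2 + a * k) * qbinPlus M (a + k) * qbinPlus S k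
            + T (k ^ 2 + a * k) * qbinPlus M (a + k) * (T (S + 1 - k) * qbin S (k - 1)))) := by
      apply finsum_congr
      intro k
      rw [qbinPlus_of_nonneg (S+1) k (by omega), qbin_pascal2 S k hS,
        qbinPlus_of_nonneg S k hS]
      ring
    rw [h1, finsum_add_distrib
      (support_finite_between 0 S _ (by
        intro k hk
        rw [qbinPlus_of_nonneg S k hS, qbin_eq_zero S k (by rcases hk with h|h <;> omega)]
        ring))
      (support_finite_between 1 (S+1) _ (by
        intro k hk
        rw [qbin_eq_zero S (k-1) (by rcases hk with h|h <;> omega)]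
        ring)),
      IH a]
    have h2 : (∑ᶠ k : ℤ, T (k ^ 2 + a * k) * qbinPlus M (a + k) * (T (S + 1 - k) * qbin S (k - 1)))
        = ∑ᶠ k : ℤ, T (S + a + 1) *
            (T (k ^ 2 + (a + 1) * k) * qbinPlus M ((a + 1) + k) * qbinPlus S k) := by
      rw [← finsum_comp_equiv (Equiv.addRight (1 : ℤ))]
      apply finsum_congr
      intro k
      simp only [Equiv.coe_addRight]
      rw [qbinPlus_of_nonneg S k hS]
      have e1 : a + (k + 1) = (a + 1) + k := by ring
      have e2 : k + 1 - 1 = k := by ring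
      rw [e1, e2]
      rw [show (T ((k+1) ^ 2 + a * (k+1)) : LaurentPolynomial ℤ) * qbinPlus M ((a+1) + k) *
            (T (S + 1 - (k+1)) * qbin S k)
          = (T ((k+1) ^ 2 + a * (k+1)) * T (S + 1 - (k+1))) *
            (qbinPlus M ((a+1) + k) * qbin S k) by ring,
        ← T_add,
        show (k+1) ^ 2 + a * (k+1) + (S + 1 - (k+1)) = (S + a + 1) + (k ^ 2 + (a+1) * k) by ring,
        T_add]
      ring
    rw [h2, ← mul_finsum' _ _ (support_finite_between 0 S _ (by
        intro k hk
        rw [qbinPlus_of_nonneg S k hS, qbin_eq_zero S k (by rcases hk with h|h <;> omega)]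
        ring)),
      IH (a + 1)]
    have hp := qbinPlus_pascal (M + S) (S + a)
    rw [show M + (S + 1) = (M + S) + 1 by ring, show S + 1 + a = (S + a) + 1 by ring, hp,
      show S + (a + 1) = S + a + 1 by ring]
    ring

/-- the Knuth-type identity for `S ≥ 0` and arbitrary `M`, with extended
q-binomial on the right. -/
theorem qbinPlus_knuth_ext (M S a : ℤ) (hS : 0 ≤ S) :
    (∑ᶠ k : ℤ, T (k ^ 2 + a * k) * qbinPlus M (a + k) * qbinPlus S k) =
      qbinPlus (M + S) (S + a) := by
  exact qbinPlus_knuth_aux M S hS a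

end
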